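/- Let E, A be real n×n matrices and let S be a real n×k matrix whose columns form a basis of the kernel of E (so k = n − rank E). If range(E) + A·(ker E) = ℝ^n (equivalently, rank([E, A·S]) = n), then the pencil (E, A) is regular, i.e., det(λE − A) is not identically zero as a polynomial in λ. -/

import Mathlib

open Matrix Polynomial

theorem stmt_16 {n k : ℕ}
    (E A : Matrix (Fin n) (Fin n) ℝ)
    (S : Matrix (Fin n) (Fin k) ℝ)
    (hSinj : Function.Injective S.mulVecLin)
    (hSker : LinearMap.range S.mulVecLin = LinearMap.ker E.mulVecLin)
    (hrank : (fromCols E (A * S)).rank = n) :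
    ((X : ℝ[X]) • E.map (Polynomial.C) - A.map (Polynomial.C)).det ≠ 0 := by
  intro hdet
  obtain ⟨v, hv, hmv⟩ := (Matrix.exists_mulVec_eq_zero_iff).mpr hdet
  set c : ℕ → Fin n → ℝ := fun m j => (v j).coeff m with hc_def
  -- coefficient relations
  have hrel : ∀ m : ℕ, E.mulVec (c m) = A.mulVec (c (m + 1)) := by
    intro m
    funext i
    have h := congrArg (fun w => Polynomial.coeff (w i) (m + 1)) hmv
    simp only [Matrix.mulVec, dotProduct, Pi.zero_apply, Polynomial.coeff_zero,
      Matrix.sub_apply, Matrix.smul_apply, Matrix.map_apply, smul_eq_mul,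
      sub_mul, mul_assoc, Polynomial.finset_sum_coeff, Polynomial.coeff_sub,
      Polynomial.coeff_X_mul, Polynomial.coeff_C_mul] at h
    rw [Finset.sum_sub_distrib] at h
    simpa [hc_def, Matrix.mulVec, dotProduct, sub_eq_zero] using h
  have hrel0 : A.mulVec (c 0) = 0 := by
    funext i
    have h := congrArg (fun w => Polynomial.coeff (w i) 0) hmv
    simp only [Matrix.mulVec, dotProduct, Pi.zero_apply, Polynomial.coeff_zero,
      Matrix.sub_apply, Matrix.smul_apply, Matrix.map_apply, smul_eq_mul,
      sub_mul, mul_assoc, Polynomial.finset_sum_coeff, Polynomial.coeff_sub,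
      Polynomial.mul_coeff_zero, Polynomial.coeff_X_zero, Polynomial.coeff_C_mul] at h
    rw [Finset.sum_sub_distrib] at h
    simpa [hc_def, Matrix.mulVec, dotProduct, sub_eq_zero, eq_comm] using h
  -- choose entry of maximal degree among nonzero entries
  have hs : (Finset.univ.filter (fun j => v j ≠ 0)).Nonempty := by
    rcases Function.ne_iff.mp hv with ⟨j, hj⟩
    exact ⟨j, by simpa using hj⟩
  obtain ⟨j0, hj0, hmax⟩ :=
    Finset.exists_max_image (Finset.univ.filter (fun j => v j ≠ 0))
      (fun j => (v j).natDegree) hs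
  rw [Finset.mem_filter] at hj0
  set d := (v j0).natDegree with hd
  have hx : c d ≠ 0 := by
    intro h
    have : (v j0).coeff d = 0 := congrFun h j0
    exact hj0.2 (Polynomial.leadingCoeff_eq_zero.mp this)
  have hcd1 : c (d + 1) = 0 := by
    funext i
    by_cases hvi : v i = 0
    · simp [hc_def, hvi]
    · have : (v i).natDegree ≤ d := hmax i (Finset.mem_filter.mpr ⟨Finset.mem_univ i, hvi⟩)
      exact Polynomial.coeff_eq_zero_of_natDegree_lt (Nat.lt_succ_of_le this)
  have hEx : E.mulVec (c d) = 0 := by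
    rw [hrel d, hcd1]
    simp [Matrix.mulVec_zero]
  have hAx : ∃ y, A.mulVec (c d) = E.mulVec y := by
    rcases Nat.eq_zero_or_pos d with h0 | hpos
    · exact ⟨0, by rw [h0, hrel0, Matrix.mulVec_zero]⟩
    · refine ⟨c (d - 1), ?_⟩
      have h := hrel (d - 1)
      rw [Nat.sub_add_cancel hpos] at h
      exact h.symm
  obtain ⟨y, hAxy⟩ := hAx
  -- linear algebra part
  set U := LinearMap.range E.mulVecLin with hU
  set V := LinearMap.range (A * S).mulVecLin with hV
  have hktop : U ⊔ V = ⊤ := by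
    have h1 : LinearMap.range (fromCols E (A * S)).mulVecLin = ⊤ := by
      apply Submodule.eq_top_of_finrank_eq
      rw [← Matrix.rank, hrank, Module.finrank_fin_fun]
    rw [← h1]
    apply le_antisymm
    · apply sup_le
      · rintro z ⟨w, rfl⟩
        exact ⟨Sum.elim w 0, by simp [Matrix.mulVecLin_apply, Matrix.fromCols_mulVec_sumElim]⟩
      · rintro z ⟨w, rfl⟩
        exact ⟨Sum.elim 0 w, by simp [Matrix.mulVecLin_apply, Matrix.fromCols_mulVec_sumElim]⟩
    · rintro z ⟨w, rfl⟩
      rw [Matrix.mulVecLin_apply, ← Sum.elim_comp_inl_inr w, Matrix.fromCols_mulVec_sumElim]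
      exact Submodule.add_mem_sup ⟨w ∘ Sum.inl, rfl⟩ ⟨w ∘ Sum.inr, rfl⟩
  have hkerE : Module.finrank ℝ (LinearMap.ker E.mulVecLin) = k := by
    rw [← hSker, LinearMap.finrank_range_of_inj hSinj, Module.finrank_fin_fun]
  have hU_rank : Module.finrank ℝ U + k = n := by
    have := LinearMap.finrank_range_add_finrank_ker E.mulVecLin
    rw [hkerE, Module.finrank_fin_fun] at this
    exact this
  have hV_le : Module.finrank ℝ V ≤ k := by
    have := (A * S).mulVecLin.finrank_range_le
    rwa [Module.finrank_fin_fun] at this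
  have hsum := Submodule.finrank_sup_add_finrank_inf_eq U V
  rw [hktop, finrank_top, Module.finrank_fin_fun] at hsum
  have hinf0 : Module.finrank ℝ (U ⊓ V : Submodule ℝ (Fin n → ℝ)) = 0 := by omega
  have hVk : Module.finrank ℝ V = k := by omega
  have hinf : U ⊓ V = ⊥ := Submodule.finrank_eq_zero.mp hinf0
  -- A*S is injective
  have hASker : LinearMap.ker (A * S).mulVecLin = ⊥ := by
    have := LinearMap.finrank_range_add_finrank_ker (A * S).mulVecLin
    rw [← hV, hVk, Module.finrank_fin_fun] at this
    exact Submodule.finrank_eq_zero.mp (by omega)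
  -- get u with S * u = c d
  have hxker : c d ∈ LinearMap.ker E.mulVecLin := by
    simpa [Matrix.mulVecLin_apply] using hEx
  rw [← hSker] at hxker
  obtain ⟨u, hu⟩ := hxker
  have hAxV : A.mulVec (c d) ∈ V := by
    refine ⟨u, ?_⟩
    rw [Matrix.mulVecLin_apply, ← Matrix.mulVec_mulVec]
    rw [Matrix.mulVecLin_apply] at hu
    rw [hu]
  have hAxU : A.mulVec (c d) ∈ U := ⟨y, by simp [Matrix.mulVecLin_apply, hAxy]⟩
  have hAx0 : A.mulVec (c d) = 0 := by
    have : A.mulVec (c d) ∈ U ⊓ V := ⟨hAxU, hAxV⟩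
    rw [hinf] at this
    exact this
  have hu0 : u = 0 := by
    have : u ∈ LinearMap.ker (A * S).mulVecLin := by
      rw [LinearMap.mem_ker, Matrix.mulVecLin_apply, ← Matrix.mulVec_mulVec]
      rw [Matrix.mulVecLin_apply] at hu
      rw [hu, hAx0]
    rwa [hASker, Submodule.mem_bot] at this
  apply hx
  rw [← hu, hu0]
  simp
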